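/- arXiv:2101.11165 — 6 statements merged into one kernel-verified Lean document; each statement's English description precedes it below -/
import Mathlib

section
/- Let H be a hypergraph and G its incidence graph. Then H is quasi-eulerian if and only if G has a spanning subgraph G' such that deg_{G'}(e) = 2 for every e-vertex e and deg_{G'}(v) is even for every v-vertex v. -/
/-- A closed trail in a hypergraph with vertex type `V` and edge index type `E`,
where `F e` is the set of vertices of the edge (with index) `e`.
It is a sequence `v₀ e₁ v₁ e₂ … e_t v_t` with `t ≥ 2`, consecutive anchors
distinct and both incident with the traversed edge, pairwise distinct edges,
and `v₀ = v_t`. -/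
structure ClosedTrail (V : Type*) (E : Type*) (F : E → Finset V) where
  len : ℕ
  two_le_len : 2 ≤ len
  verts : Fin (len + 1) → V
  edges : Fin len → E
  mem_left : ∀ i : Fin len, verts i.castSucc ∈ F (edges i)
  mem_right : ∀ i : Fin len, verts i.succ ∈ F (edges i)
  verts_ne : ∀ i : Fin len, verts i.castSucc ≠ verts i.succ
  edges_injective : Function.Injective edges
  closed : verts 0 = verts (Fin.last len)

/-- An Euler family: a (finite) collection of pairwise anchor-disjoint and
edge-disjoint closed trails jointly traversing every edge exactly once. -/
def HasEulerFamily (V : Type*) (E : Type*) (F : E → Finset V) : Prop :=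
  ∃ (n : ℕ) (T : Fin n → ClosedTrail V E F),
    (∀ i j : Fin n, i ≠ j →
      ∀ (a : Fin ((T i).len + 1)) (b : Fin ((T j).len + 1)),
        (T i).verts a ≠ (T j).verts b) ∧
    (∀ e : E, ∃! p : (i : Fin n) × Fin ((T i).len), (T p.1).edges p.2 = e)

/-- An Euler tour: a closed trail traversing every edge exactly once. -/
def HasEulerTour (V : Type*) (E : Type*) (F : E → Finset V) : Prop :=
  ∃ T : ClosedTrail V E F, Function.Bijective T.edges

/-- An `ℓ`-covering `k`-hypergraph: `k`-uniform, and every `ℓ`-subset of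
vertices lies in at least one edge. -/
def IsCoveringHypergraph (V : Type*) (E : Type*) (F : E → Finset V)
    (ℓ k : ℕ) : Prop :=
  (∀ e : E, (F e).card = k) ∧
  (∀ S : Finset V, S.card = ℓ → ∃ e : E, S ⊆ F e)

/-- Two vertices are related if they lie in a common edge; the reflexive
transitive (symmetric) closure of this relation gives connectivity by walks. -/
def HypAdj (V : Type*) (E : Type*) (F : E → Finset V) (a b : V) : Prop :=
  ∃ e : E, a ∈ F e ∧ b ∈ F e

/-- The number of connected components of a hypergraph (including trivial
components consisting of a single isolated vertex). -/
noncomputable def numComponents (V : Type*) (E : Type*) (F : E → Finset V) : ℕ :=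
  Nat.card (Quot (HypAdj V E F))

/-- `e` is a cut edge of `H` if removing it increases the number of
connected components. -/
def IsCutEdge (V : Type*) (E : Type*) (F : E → Finset V) (e : E) : Prop :=
  numComponents V E F < numComponents V {e' : E // e' ≠ e} (fun e' => F e'.1)

/-- The incidence graph of a hypergraph: a bipartite simple graph on
`V ⊕ E`, where `Sum.inl v` is adjacent to `Sum.inr e` iff `v ∈ F e`. -/
def incidenceGraph (V : Type*) (E : Type*) (F : E → Finset V) :
    SimpleGraph (V ⊕ E) where
  Adj x y :=
    (∃ v e, x = Sum.inl v ∧ y = Sum.inr e ∧ v ∈ F e) ∨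
    (∃ v e, x = Sum.inr e ∧ y = Sum.inl v ∧ v ∈ F e)
  symm := by
    constructor
    rintro x y (⟨v, e, hx, hy, h⟩ | ⟨v, e, hx, hy, h⟩)
    · exact Or.inr ⟨v, e, hy, hx, h⟩
    · exact Or.inl ⟨v, e, hy, hx, h⟩
  loopless := by
    constructor
    rintro x (⟨v, e, hx, hy, h⟩ | ⟨v, e, hx, hy, h⟩) <;> simp_all

section Aux
variable {V E : Type*}

/-- An (open) trail in the multigraph on `V` whose edge `e : E` has endpoints `A e`, `B e`. -/
structure OT (V E : Type*) (A B : E → V) where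
  len : ℕ
  pos : 0 < len
  verts : Fin (len + 1) → V
  edges : Fin len → E
  incL : ∀ i : Fin len, verts i.castSucc = A (edges i) ∨ verts i.castSucc = B (edges i)
  incR : ∀ i : Fin len, verts i.succ = A (edges i) ∨ verts i.succ = B (edges i)
  vne  : ∀ i : Fin len, verts i.castSucc ≠ verts i.succ
  inj  : Function.Injective edges

variable {A B : E → V}

def OT.IsClosed (T : OT V E A B) : Prop := T.verts 0 = T.verts (Fin.last _)

lemma OT.slot (T : OT V E A B) (i : Fin T.len) :
    (T.verts i.castSucc = A (T.edges i) ∧ T.verts i.succ = B (T.edges i)) ∨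
    (T.verts i.castSucc = B (T.edges i) ∧ T.verts i.succ = A (T.edges i)) := by
  rcases T.incL i with h1 | h1 <;> rcases T.incR i with h2 | h2
  · exact absurd (h1.trans h2.symm) (T.vne i)
  · exact Or.inl ⟨h1, h2⟩
  · exact Or.inr ⟨h1, h2⟩
  · exact absurd (h1.trans h2.symm) (T.vne i)

lemma OT.slot_of_inc (T : OT V E A B) (i : Fin T.len) (v : V)
    (hv : v = A (T.edges i) ∨ v = B (T.edges i)) :
    T.verts i.castSucc = v ∨ T.verts i.succ = v := by
  rcases T.slot i with ⟨h1, h2⟩ | ⟨h1, h2⟩ <;> rcases hv with hv | hv <;>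
    simp [h1, h2, hv]

lemma OT.inc_of_slot (T : OT V E A B) (i : Fin T.len) (v : V)
    (hv : T.verts i.castSucc = v ∨ T.verts i.succ = v) :
    v = A (T.edges i) ∨ v = B (T.edges i) := by
  rcases T.slot i with ⟨h1, h2⟩ | ⟨h1, h2⟩ <;> rcases hv with hv | hv <;>
    simp [← hv, h1, h2]

variable [DecidableEq V]

lemma OT.cardL (T : OT V E A B) (v : V) :
    (Finset.univ.filter fun i : Fin T.len => T.verts i.castSucc = v).card
      + (if T.verts (Fin.last _) = v then 1 else 0)
    = (Finset.univ.filter fun j : Fin (T.len + 1) => T.verts j = v).card := by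
  rw [Finset.card_filter, Finset.card_filter, Fin.sum_univ_castSucc]

lemma OT.cardR (T : OT V E A B) (v : V) :
    (Finset.univ.filter fun i : Fin T.len => T.verts i.succ = v).card
      + (if T.verts 0 = v then 1 else 0)
    = (Finset.univ.filter fun j : Fin (T.len + 1) => T.verts j = v).card := by
  rw [Finset.card_filter, Finset.card_filter, Fin.sum_univ_succ]
  ring

lemma OT.card_split (T : OT V E A B) (v : V) :
    (Finset.univ.filter fun i : Fin T.len =>
        T.verts i.castSucc = v ∨ T.verts i.succ = v).card
      = (Finset.univ.filter fun i : Fin T.len => T.verts i.castSucc = v).card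
        + (Finset.univ.filter fun i : Fin T.len => T.verts i.succ = v).card := by
  rw [Finset.filter_or, Finset.card_union_of_disjoint]
  rw [Finset.disjoint_filter]
  intro i _ h1 h2
  exact T.vne i (h1.trans h2.symm)

lemma OT.cnt_odd (T : OT V E A B) (h : T.verts 0 ≠ T.verts (Fin.last _)) :
    Odd ((Finset.univ.filter fun i : Fin T.len =>
        T.verts i.castSucc = T.verts (Fin.last _) ∨
        T.verts i.succ = T.verts (Fin.last _)).card) := by
  set v := T.verts (Fin.last _) with hv
  have hL := T.cardL v
  have hR := T.cardR v
  have hS := T.card_split v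
  have h1 : (if T.verts (Fin.last _) = v then 1 else 0) = 1 := by simp [hv]
  have h2 : (if T.verts 0 = v then 1 else 0) = 0 := by simp [h]
  have hN : 0 < (Finset.univ.filter fun j : Fin (T.len + 1) => T.verts j = v).card := by
    refine Finset.card_pos.2 ⟨Fin.last _, ?_⟩
    simp [hv]
  rw [Nat.odd_iff]
  omega

lemma OT.cnt_even (T : OT V E A B) (hc : T.IsClosed) (v : V) :
    Even ((Finset.univ.filter fun i : Fin T.len =>
        T.verts i.castSucc = v ∨ T.verts i.succ = v).card) := by
  have hL := T.cardL v
  have hR := T.cardR v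
  have hS := T.card_split v
  have h1 : (if T.verts (Fin.last _) = v then 1 else 0) = (if T.verts 0 = v then 1 else 0) := by
    rw [hc.symm]  -- hc : verts 0 = verts last
  rw [Nat.even_iff]
  omega


lemma OT.two_le_of_closed (T : OT V E A B) (hc : T.IsClosed) : 2 ≤ T.len := by
  rcases Nat.lt_or_ge T.len 2 with h | h
  · exfalso
    have h1 : T.len = 1 := by have := T.pos; omega
    have h2 := T.vne ⟨0, T.pos⟩
    apply h2
    have e1 : (⟨0, T.pos⟩ : Fin T.len).castSucc = 0 := by apply Fin.ext; simp
    have e2 : (⟨0, T.pos⟩ : Fin T.len).succ = Fin.last T.len := by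
      apply Fin.ext; simp [h1]
    rw [e1, e2]; exact hc
  · exact h


lemma OT.extend_open (T : OT V E A B) (e : E)
    (hv : T.verts (Fin.last _) = A e ∨ T.verts (Fin.last _) = B e)
    (hnew : ∀ i, T.edges i ≠ e) (hab : A e ≠ B e) :
    ∃ T' : OT V E A B, T'.len = T.len + 1 ∧
      ∀ i : Fin T'.len, T'.edges i = e ∨ ∃ j, T'.edges i = T.edges j := by
  set w : V := if T.verts (Fin.last _) = A e then B e else A e with hw
  have hvw : T.verts (Fin.last _) ≠ w := by
    by_cases h : T.verts (Fin.last _) = A e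
    · rw [hw, if_pos h, h]; exact hab
    · rcases hv with hv | hv
      · exact absurd hv h
      · rw [hw, if_neg h, hv]; exact fun hh => hab hh.symm
  have hew : w = A e ∨ w = B e := by
    by_cases h : T.verts (Fin.last _) = A e
    · rw [hw, if_pos h]; exact Or.inr rfl
    · rw [hw, if_neg h]; exact Or.inl rfl
  refine ⟨{ len := T.len + 1, pos := Nat.succ_pos _,
            verts := fun i => if h : i.val ≤ T.len then T.verts ⟨i.val, by omega⟩ else w,
            edges := fun i => if h : i.val < T.len then T.edges ⟨i.val, h⟩ else e,
            incL := ?_, incR := ?_, vne := ?_, inj := ?_ }, rfl, ?_⟩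
  · intro i
    have hc : (i.castSucc.val : ℕ) = i.val := rfl
    by_cases h : i.val < T.len
    · have h1 : (i.castSucc).val ≤ T.len := by omega
      simp only [dif_pos h1, dif_pos h]
      have := T.incL ⟨i.val, h⟩
      convert this using 2 <;> rfl
    · have hi : i.val = T.len := by omega
      have h1 : (i.castSucc).val ≤ T.len := by omega
      simp only [dif_pos h1, dif_neg h]
      have : (⟨i.castSucc.val, by omega⟩ : Fin (T.len + 1)) = Fin.last _ := by
        apply Fin.ext; simp [hc, hi]
      rw [this]; exact hv
  · intro i
    have hc : (i.succ.val : ℕ) = i.val + 1 := rfl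
    by_cases h : i.val < T.len
    · have h1 : (i.succ).val ≤ T.len := by simp [hc]; omega
      simp only [dif_pos h1, dif_pos h]
      have := T.incR ⟨i.val, h⟩
      convert this using 2 <;> rfl
    · have hi : i.val = T.len := by omega
      have h1 : ¬ ((i.succ).val ≤ T.len) := by simp [hc]; omega
      simp only [dif_neg h1, dif_neg h]
      exact hew
  · intro i
    by_cases h : i.val < T.len
    · have h1 : (i.castSucc).val ≤ T.len := by simp; omega
      have h2 : (i.succ).val ≤ T.len := by simp; omega
      simp only [dif_pos h1, dif_pos h2]
      have := T.vne ⟨i.val, h⟩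
      convert this using 2 <;> rfl
    · have hi : i.val = T.len := by omega
      have h1 : (i.castSucc).val ≤ T.len := by simp; omega
      have h2 : ¬ ((i.succ).val ≤ T.len) := by simp; omega
      simp only [dif_pos h1, dif_neg h2]
      have : (⟨i.castSucc.val, by omega⟩ : Fin (T.len + 1)) = Fin.last _ := by
        apply Fin.ext; simp [hi]
      rw [this]; exact hvw
  · intro i1 i2 h
    by_cases h1 : i1.val < T.len <;> by_cases h2 : i2.val < T.len
    · simp only [dif_pos h1, dif_pos h2] at h
      have h3 := T.inj h
      simp only [Fin.mk.injEq] at h3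
      exact Fin.ext h3
    · simp only [dif_pos h1, dif_neg h2] at h
      exact absurd h (hnew _)
    · simp only [dif_neg h1, dif_pos h2] at h
      exact absurd h.symm (hnew _)
    · apply Fin.ext; omega
  · intro i
    by_cases h : i.val < T.len
    · exact Or.inr ⟨⟨i.val, h⟩, dif_pos h⟩
    · exact Or.inl (dif_neg h)


lemma OT.extend_rot (T : OT V E A B) (hc : T.IsClosed) (k : ℕ) (hk : k < T.len)
    (e : E)
    (hv : T.verts ⟨k, by omega⟩ = A e ∨ T.verts ⟨k, by omega⟩ = B e)
    (hnew : ∀ i, T.edges i ≠ e) (hab : A e ≠ B e) :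
    ∃ T' : OT V E A B, T'.len = T.len + 1 ∧
      ∀ i : Fin T'.len, T'.edges i = e ∨ ∃ j, T'.edges i = T.edges j := by
  have hL2 : 2 ≤ T.len := T.two_le_of_closed hc
  have hLpos : 0 < T.len := T.pos
  have hmod : ∀ x : ℕ, x % T.len < T.len := fun x => Nat.mod_lt _ hLpos
  have hmod1 : ∀ x : ℕ, x % T.len < T.len + 1 := fun x => by have := hmod x; omega
  have hadd1 : ∀ x : ℕ, (x + 1) % T.len = (x % T.len + 1) % T.len := by
    intro x
    conv_lhs => rw [Nat.add_mod]
    rw [Nat.mod_eq_of_lt (show 1 < T.len by omega)]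
  -- the key step lemma
  have hstep : ∀ x : ℕ,
      T.verts ((⟨x % T.len, hmod x⟩ : Fin T.len).succ) =
        T.verts ⟨(x + 1) % T.len, hmod1 _⟩ := by
    intro x
    rcases Nat.lt_or_ge (x % T.len + 1) T.len with h | h
    · have h2 : (x + 1) % T.len = x % T.len + 1 := by
        rw [hadd1, Nat.mod_eq_of_lt h]
      congr 1
      apply Fin.ext
      simp [h2]
    · have h1 : x % T.len + 1 = T.len := by have := hmod x; omega
      have h2 : (x + 1) % T.len = 0 := by
        rw [hadd1, h1, Nat.mod_self]
      have e1 : (⟨x % T.len, hmod x⟩ : Fin T.len).succ = Fin.last T.len := by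
        apply Fin.ext; simp [h1]
      have e2 : (⟨(x + 1) % T.len, hmod1 _⟩ : Fin (T.len + 1)) = 0 := by
        apply Fin.ext; simp [h2]
      rw [e1, e2]
      exact hc.symm
  set w : V := if T.verts ⟨k, by omega⟩ = A e then B e else A e with hw
  have hvw : T.verts ⟨k, by omega⟩ ≠ w := by
    by_cases h : T.verts ⟨k, by omega⟩ = A e
    · rw [hw, if_pos h, h]; exact hab
    · rcases hv with hv | hv
      · exact absurd hv h
      · rw [hw, if_neg h, hv]; exact fun hh => hab hh.symm
  have hew : w = A e ∨ w = B e := by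
    by_cases h : T.verts ⟨k, by omega⟩ = A e
    · rw [hw, if_pos h]; exact Or.inr rfl
    · rw [hw, if_neg h]; exact Or.inl rfl
  refine ⟨{ len := T.len + 1, pos := Nat.succ_pos _,
            verts := fun i => if h : i.val ≤ T.len
              then T.verts ⟨(k + i.val) % T.len, hmod1 _⟩ else w,
            edges := fun i => if h : i.val < T.len
              then T.edges ⟨(k + i.val) % T.len, hmod _⟩ else e,
            incL := ?_, incR := ?_, vne := ?_, inj := ?_ }, rfl, ?_⟩
  · intro i
    simp only [Fin.coe_castSucc]
    by_cases h : i.val < T.len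
    · rw [dif_pos (show (i : ℕ) ≤ T.len by omega), dif_pos h]
      have := T.incL ⟨(k + i.val) % T.len, hmod _⟩
      convert this using 2 <;> rfl
    · have hi : i.val = T.len := by omega
      rw [dif_pos (show (i : ℕ) ≤ T.len by omega), dif_neg h]
      have heq : (⟨(k + i.val) % T.len, hmod1 _⟩ : Fin (T.len + 1)) = ⟨k, by omega⟩ := by
        apply Fin.ext
        simp only [hi]
        rw [Nat.add_mod_right, Nat.mod_eq_of_lt hk]
      rw [heq]
      exact hv
  · intro i
    simp only [Fin.val_succ]
    by_cases h : i.val < T.len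
    · rw [dif_pos (show (i : ℕ) + 1 ≤ T.len by omega), dif_pos h]
      have := T.incR ⟨(k + i.val) % T.len, hmod _⟩
      rw [hstep (k + i.val)] at this
      have heq : (⟨(k + ((i:ℕ) + 1)) % T.len, hmod1 _⟩ : Fin (T.len + 1))
          = ⟨(k + (i:ℕ) + 1) % T.len, hmod1 _⟩ := by
        apply Fin.ext
        show (k + ((i:ℕ) + 1)) % T.len = (k + (i:ℕ) + 1) % T.len
        congr 1
      rw [heq]
      exact this
    · rw [dif_neg (show ¬ ((i : ℕ) + 1 ≤ T.len) by omega), dif_neg h]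
      exact hew
  · intro i
    simp only [Fin.coe_castSucc, Fin.val_succ]
    by_cases h : i.val < T.len
    · rw [dif_pos (show (i : ℕ) ≤ T.len by omega),
        dif_pos (show (i : ℕ) + 1 ≤ T.len by omega)]
      have := T.vne ⟨(k + i.val) % T.len, hmod _⟩
      rw [hstep (k + i.val)] at this
      have heq : (⟨(k + ((i:ℕ) + 1)) % T.len, hmod1 _⟩ : Fin (T.len + 1))
          = ⟨(k + (i:ℕ) + 1) % T.len, hmod1 _⟩ := by
        apply Fin.ext
        show (k + ((i:ℕ) + 1)) % T.len = (k + (i:ℕ) + 1) % T.len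
        congr 1
      rw [heq]
      convert this using 2 <;> rfl
    · have hi : i.val = T.len := by omega
      rw [dif_pos (show (i : ℕ) ≤ T.len by omega),
        dif_neg (show ¬ ((i : ℕ) + 1 ≤ T.len) by omega)]
      have heq : (⟨(k + i.val) % T.len, hmod1 _⟩ : Fin (T.len + 1)) = ⟨k, by omega⟩ := by
        apply Fin.ext
        simp only [hi]
        rw [Nat.add_mod_right, Nat.mod_eq_of_lt hk]
      rw [heq]
      exact hvw
  · intro i1 i2 h
    by_cases h1 : i1.val < T.len <;> by_cases h2 : i2.val < T.len
    · simp only [dif_pos h1, dif_pos h2] at h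
      have h3 := T.inj h
      simp only [Fin.mk.injEq] at h3
      have h4 : (i1.val : ℕ) ≡ i2.val [MOD T.len] :=
        Nat.ModEq.add_left_cancel' k h3
      have h5 : (i1.val : ℕ) % T.len = (i2.val : ℕ) % T.len := h4
      apply Fin.ext
      rwa [Nat.mod_eq_of_lt h1, Nat.mod_eq_of_lt h2] at h5
    · simp only [dif_pos h1, dif_neg h2] at h
      exact absurd h (hnew _)
    · simp only [dif_neg h1, dif_pos h2] at h
      exact absurd h.symm (hnew _)
    · apply Fin.ext; omega
  · intro i
    by_cases h : i.val < T.len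
    · exact Or.inr ⟨⟨(k + i.val) % T.len, hmod _⟩, dif_pos h⟩
    · exact Or.inl (dif_neg h)


lemma OT.len_le (T : OT V E A B) [DecidableEq E] (S : Finset E)
    (hS : ∀ i, T.edges i ∈ S) : T.len ≤ S.card := by
  have h := Finset.card_le_card_of_injOn (s := (Finset.univ : Finset (Fin T.len)))
    (t := S) (f := fun i : Fin T.len => T.edges i)
    (fun i _ => hS i) (fun i _ j _ hij => T.inj hij)
  simpa using h

lemma exists_base (e : E) (hab : A e ≠ B e) :
    ∃ T : OT V E A B, T.len = 1 ∧ ∀ i, T.edges i = e := by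
  refine ⟨{ len := 1, pos := Nat.one_pos,
            verts := fun i => if i.val = 0 then A e else B e,
            edges := fun _ => e,
            incL := ?_, incR := ?_, vne := ?_,
            inj := fun i j _ => Subsingleton.elim i j }, rfl, fun _ => rfl⟩
  · intro i
    have hi := i.isLt
    simp only [Fin.coe_castSucc]
    rw [if_pos (show (i:ℕ) = 0 by omega)]
    exact Or.inl rfl
  · intro i
    simp only [Fin.val_succ]
    rw [if_neg (show ¬((i:ℕ) + 1 = 0) by omega)]
    exact Or.inr rfl
  · intro i
    have hi := i.isLt
    simp only [Fin.coe_castSucc, Fin.val_succ]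
    rw [if_pos (show (i:ℕ) = 0 by omega), if_neg (show ¬((i:ℕ) + 1 = 0) by omega)]
    exact hab

lemma exists_sat [DecidableEq E] (hab : ∀ e, A e ≠ B e) (S : Finset E)
    (hne : S.Nonempty)
    (heven : ∀ v, Even ((S.filter (fun e => v = A e ∨ v = B e)).card)) :
    ∃ T : OT V E A B, (∀ i, T.edges i ∈ S) ∧ T.IsClosed ∧
      (∀ (j : Fin (T.len + 1)) (e : E), e ∈ S →
        (T.verts j = A e ∨ T.verts j = B e) → ∃ i, T.edges i = e) := by
  classical
  set P : ℕ → Prop := fun m => ∃ T : OT V E A B, (∀ i, T.edges i ∈ S) ∧ T.len = m with hP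
  have hP1 : P 1 := by
    obtain ⟨e, he⟩ := hne
    obtain ⟨T, hT1, hT2⟩ := exists_base (A := A) (B := B) e (hab e)
    exact ⟨T, fun i => (hT2 i) ▸ he, hT1⟩
  have hbd : ∀ m, P m → m ≤ S.card := by
    rintro m ⟨T, hT, rfl⟩; exact T.len_le S hT
  set M := Nat.findGreatest P S.card with hM
  have hPM : P M := Nat.findGreatest_spec (hbd 1 hP1) hP1
  have hmax : ∀ m, P m → m ≤ M := fun m hm => Nat.le_findGreatest (hbd m hm) hm
  obtain ⟨T, hTS, hTlen⟩ := hPM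
  -- maximality in convenient form
  have hmaxT : ∀ T' : OT V E A B, (∀ i, T'.edges i ∈ S) → T'.len ≤ T.len := by
    intro T' hT'
    rw [hTlen]
    exact hmax _ ⟨T', hT', rfl⟩
  have hclosed : T.IsClosed := by
    by_contra hopen
    have hodd := T.cnt_odd hopen
    set v := T.verts (Fin.last _) with hv
    set Fs := Finset.univ.filter
      (fun i : Fin T.len => T.verts i.castSucc = v ∨ T.verts i.succ = v) with hFs
    set U := Fs.image T.edges with hU
    have hUcard : U.card = Fs.card := Finset.card_image_of_injective _ T.inj
    have hUsub : U ⊆ S.filter (fun e => v = A e ∨ v = B e) := by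
      intro e he
      rw [hU, Finset.mem_image] at he
      obtain ⟨i, hi, rfl⟩ := he
      rw [hFs, Finset.mem_filter] at hi
      exact Finset.mem_filter.2 ⟨hTS i, T.inc_of_slot i v hi.2⟩
    have hUne : U ≠ S.filter (fun e => v = A e ∨ v = B e) := by
      intro h
      have hev := heven v
      rw [← h, hUcard] at hev
      rw [Nat.even_iff] at hev
      rw [Nat.odd_iff] at hodd
      omega
    obtain ⟨e, heF, heU⟩ := Finset.exists_of_ssubset (lt_of_le_of_ne hUsub hUne)
    rw [Finset.mem_filter] at heF
    have hnu : ∀ i, T.edges i ≠ e := by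
      intro i hi
      apply heU
      rw [hU, Finset.mem_image]
      refine ⟨i, ?_, hi⟩
      rw [hFs, Finset.mem_filter]
      exact ⟨Finset.mem_univ _, T.slot_of_inc i v (hi ▸ heF.2)⟩
    have hvinc : T.verts (Fin.last _) = A e ∨ T.verts (Fin.last _) = B e := by
      rcases heF.2 with h | h
      · exact Or.inl (h ▸ hv ▸ rfl)
      · exact Or.inr (h ▸ hv ▸ rfl)
    obtain ⟨T', hlen', hform⟩ := T.extend_open e hvinc hnu (hab e)
    have hT'S : ∀ i, T'.edges i ∈ S := by
      intro i
      rcases hform i with h | ⟨j, h⟩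
      · rw [h]; exact heF.1
      · rw [h]; exact hTS j
    have := hmaxT T' hT'S
    omega
  refine ⟨T, hTS, hclosed, ?_⟩
  intro j e heS hinc
  by_contra hnot
  push_neg at hnot
  have hLpos := T.pos
  set k := j.val % T.len with hk
  have hkk : k < T.len := Nat.mod_lt _ hLpos
  have hvk : T.verts ⟨k, by omega⟩ = T.verts j := by
    rcases Nat.lt_or_ge j.val T.len with h | h
    · congr 1
      apply Fin.ext
      simp only [hk]
      exact Nat.mod_eq_of_lt h
    · have hj : j.val = T.len := by omega
      have e1 : (⟨k, by omega⟩ : Fin (T.len + 1)) = 0 := by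
        apply Fin.ext; simp [hk, hj]
      have e2 : j = Fin.last T.len := by apply Fin.ext; simp [hj]
      rw [e1, e2]
      exact hclosed
  have hinck : T.verts ⟨k, by omega⟩ = A e ∨ T.verts ⟨k, by omega⟩ = B e := by
    rw [hvk]; exact hinc
  obtain ⟨T', hlen', hform⟩ := T.extend_rot hclosed k hkk e hinck hnot (hab e)
  have hT'S : ∀ i, T'.edges i ∈ S := by
    intro i
    rcases hform i with h | ⟨jj, h⟩
    · rw [h]; exact heS
    · rw [h]; exact hTS jj
  have := hmaxT T' hT'S
  omega


lemma OT.anchor_inc (T : OT V E A B) (hc : T.IsClosed) (q : Fin (T.len + 1)) :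
    ∃ i : Fin T.len, T.verts q = A (T.edges i) ∨ T.verts q = B (T.edges i) := by
  rcases Nat.lt_or_ge q.val T.len with h | h
  · refine ⟨⟨q.val, h⟩, T.inc_of_slot _ _ (Or.inl ?_)⟩
    have hcs : (⟨q.val, h⟩ : Fin T.len).castSucc = q := by apply Fin.ext; simp
    rw [hcs]
  · have hq : q = Fin.last _ := by
      apply Fin.ext
      simp only [Fin.val_last]
      have := q.isLt
      omega
    refine ⟨⟨0, T.pos⟩, T.inc_of_slot _ _ (Or.inl ?_)⟩
    have h0 : ((⟨0, T.pos⟩ : Fin T.len).castSucc) = (0 : Fin (T.len + 1)) := by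
      apply Fin.ext; simp
    rw [hq, ← hc, h0]

lemma exists_family [DecidableEq E] (hab : ∀ e, A e ≠ B e) :
    ∀ (N : ℕ) (S : Finset E), S.card ≤ N →
      (∀ v, Even ((S.filter (fun e => v = A e ∨ v = B e)).card)) →
      ∃ Ls : List (OT V E A B),
        (∀ T ∈ Ls, T.IsClosed ∧ ∀ i, T.edges i ∈ S) ∧
        List.Pairwise (fun T T' => ∀ p q, T.verts p ≠ T'.verts q) Ls ∧
        (∀ e ∈ S, ∃ T ∈ Ls, ∃ i, T.edges i = e) := by
  intro N
  induction N with
  | zero =>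
    intro S hS heven
    have hemp : S = ∅ := Finset.card_eq_zero.mp (le_antisymm hS (Nat.zero_le _))
    exact ⟨[], by simp, by simp, by simp [hemp]⟩
  | succ N ih =>
    intro S hS heven
    by_cases hne : S.Nonempty
    · obtain ⟨T, hTS, hclosed, hsat⟩ := exists_sat hab S hne heven
      set S' := S.filter (fun e => ∀ i, T.edges i ≠ e) with hS'
      have hsub : S' ⊆ S := Finset.filter_subset _ _
      have hlt : S'.card < S.card := by
        apply Finset.card_lt_card
        constructor
        · exact hsub
        · intro hcon
          have h1 := hcon (hTS ⟨0, T.pos⟩)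
          rw [hS', Finset.mem_filter] at h1
          exact h1.2 ⟨0, T.pos⟩ rfl
      have heven' : ∀ v, Even ((S'.filter (fun e => v = A e ∨ v = B e)).card) := by
        intro v
        by_cases hv : ∃ q : Fin (T.len + 1), T.verts q = v
        · have hemp : S'.filter (fun e => v = A e ∨ v = B e) = ∅ := by
            rw [Finset.eq_empty_iff_forall_notMem]
            intro e he
            rw [Finset.mem_filter] at he
            obtain ⟨q, hq⟩ := hv
            obtain ⟨he1, he2⟩ := he
            rw [hS', Finset.mem_filter] at he1
            obtain ⟨i, hi⟩ := hsat q e he1.1 (by rw [hq]; exact he2)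
            exact he1.2 i hi
          simp [hemp]
        · push_neg at hv
          have heq : S'.filter (fun e => v = A e ∨ v = B e)
              = S.filter (fun e => v = A e ∨ v = B e) := by
            apply Finset.Subset.antisymm
            · exact Finset.filter_subset_filter _ hsub
            · intro e he
              rw [Finset.mem_filter] at he ⊢
              refine ⟨Finset.mem_filter.2 ⟨he.1, ?_⟩, he.2⟩
              intro i hi
              rcases T.slot_of_inc i v (by rw [hi]; exact he.2) with hq | hq
              · exact hv _ hq
              · exact hv _ hq
          rw [heq]
          exact heven v
      obtain ⟨Ls', hLs'A, hLs'P, hLs'C⟩ := ih S' (by omega) heven'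
      refine ⟨T :: Ls', ?_, ?_, ?_⟩
      · intro T' hT'
        rcases List.mem_cons.mp hT' with rfl | h
        · exact ⟨hclosed, hTS⟩
        · obtain ⟨h1, h2⟩ := hLs'A T' h
          exact ⟨h1, fun i => hsub (h2 i)⟩
      · rw [List.pairwise_cons]
        refine ⟨?_, hLs'P⟩
        intro T' hT' p q heq
        obtain ⟨hT'c, hT'S⟩ := hLs'A T' hT'
        obtain ⟨j, hj⟩ := T'.anchor_inc hT'c q
        have he'S : T'.edges j ∈ S' := hT'S j
        rw [hS', Finset.mem_filter] at he'S
        obtain ⟨i, hi⟩ := hsat p (T'.edges j) he'S.1 (by rw [heq]; exact hj)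
        exact he'S.2 i hi
      · intro e heS
        by_cases h : ∃ i, T.edges i = e
        · exact ⟨T, List.mem_cons_self, h⟩
        · push_neg at h
          obtain ⟨T', hT', hi⟩ := hLs'C e (Finset.mem_filter.2 ⟨heS, h⟩)
          exact ⟨T', List.mem_cons_of_mem _ hT', hi⟩
    · rw [Finset.not_nonempty_iff_eq_empty] at hne
      exact ⟨[], by simp, by simp, by simp [hne]⟩


lemma OT.exists_anchor_A (T : OT V E A B) (i : Fin T.len) :
    ∃ r : Fin (T.len + 1), T.verts r = A (T.edges i) := by
  rcases T.slot i with ⟨h1, h2⟩ | ⟨h1, h2⟩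
  · exact ⟨i.castSucc, h1⟩
  · exact ⟨i.succ, h2⟩

end Aux

-- BEGIN NEW
section Fwd
variable {V E : Type*}

lemma nat_prev_lt (L p : ℕ) (hL : 0 < L) : (p + L - 1) % L < L := Nat.mod_lt _ hL

lemma nat_prev_nxt (L p : ℕ) (hL : 0 < L) (hp : p < L) :
    ((p + 1) % L + L - 1) % L = p := by
  rcases Nat.lt_or_ge (p + 1) L with h | h
  · rw [Nat.mod_eq_of_lt h, show p + 1 + L - 1 = p + L by omega,
      Nat.add_mod_right, Nat.mod_eq_of_lt hp]
  · have h1 : p + 1 = L := by omega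
    rw [h1, Nat.mod_self, Nat.mod_eq_of_lt (by omega)]
    omega

lemma nat_nxt_prev (L p : ℕ) (hL : 0 < L) (hp : p < L) :
    ((p + L - 1) % L + 1) % L = p := by
  rcases Nat.eq_zero_or_pos p with rfl | h
  · rw [Nat.mod_eq_of_lt (show 0 + L - 1 < L by omega),
      show 0 + L - 1 + 1 = L by omega, Nat.mod_self]
  · rw [show p + L - 1 = (p - 1) + L by omega, Nat.add_mod_right,
      Nat.mod_eq_of_lt (show p - 1 < L by omega), show p - 1 + 1 = p by omega,
      Nat.mod_eq_of_lt hp]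

variable {F : E → Finset V}

def CTprev (T : ClosedTrail V E F) (p : Fin T.len) : Fin T.len :=
  ⟨(p.val + T.len - 1) % T.len, Nat.mod_lt _ (by have := T.two_le_len; omega)⟩

def CTnxt (T : ClosedTrail V E F) (p : Fin T.len) : Fin T.len :=
  ⟨(p.val + 1) % T.len, Nat.mod_lt _ (by have := T.two_le_len; omega)⟩

lemma CTprev_nxt (T : ClosedTrail V E F) (p : Fin T.len) : CTprev T (CTnxt T p) = p := by
  apply Fin.ext
  exact nat_prev_nxt T.len p.val (by have := T.two_le_len; omega) p.isLt

lemma CTnxt_prev (T : ClosedTrail V E F) (p : Fin T.len) : CTnxt T (CTprev T p) = p := by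
  apply Fin.ext
  exact nat_nxt_prev T.len p.val (by have := T.two_le_len; omega) p.isLt

lemma CTprev_succ (T : ClosedTrail V E F) (p : Fin T.len) :
    T.verts (CTprev T p).succ = T.verts p.castSucc := by
  have hL : 0 < T.len := by have := T.two_le_len; omega
  rcases Nat.eq_zero_or_pos p.val with h0 | h0
  · have h1 : (CTprev T p).succ = Fin.last T.len := by
      apply Fin.ext
      simp only [Fin.val_succ, Fin.val_last, CTprev, h0]
      rw [Nat.mod_eq_of_lt (by omega)]
      omega
    have h2 : p.castSucc = (0 : Fin (T.len + 1)) := by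
      apply Fin.ext; simp [h0]
    rw [h1, h2, ← T.closed]
  · have h1 : ((CTprev T p).succ : ℕ) = p.val := by
      simp only [Fin.val_succ, CTprev]
      rw [show p.val + T.len - 1 = (p.val - 1) + T.len by omega, Nat.add_mod_right,
        Nat.mod_eq_of_lt (by have := p.isLt; omega)]
      omega
    congr 1
    apply Fin.ext
    simp only [Fin.coe_castSucc]
    exact h1

lemma CTnxt_castSucc (T : ClosedTrail V E F) (p : Fin T.len) :
    T.verts (CTnxt T p).castSucc = T.verts p.succ := by
  have := CTprev_succ T (CTnxt T p)
  rw [CTprev_nxt] at this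
  exact this.symm

lemma forward_dir [Fintype V] [Fintype E] (F : E → Finset V)
    (h : HasEulerFamily V E F) :
    ∃ G' : SimpleGraph (V ⊕ E), G' ≤ incidenceGraph V E F ∧
      (∀ e : E, (G'.neighborSet (Sum.inr e)).ncard = 2) ∧
      (∀ v : V, Even ((G'.neighborSet (Sum.inl v)).ncard)) := by
  classical
  obtain ⟨n, fam, hdisj, huniq⟩ := h
  set R : (V ⊕ E) → (V ⊕ E) → Prop := fun x y =>
    ∃ (i : Fin n) (p : Fin ((fam i).len)), x = Sum.inr ((fam i).edges p) ∧
      (y = Sum.inl ((fam i).verts p.castSucc) ∨ y = Sum.inl ((fam i).verts p.succ))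
    with hRdef
  refine ⟨{ Adj := fun x y => R x y ∨ R y x,
            symm := ⟨fun x y hh => Or.symm hh⟩,
            loopless := ⟨?_⟩ }, ?_, ?_, ?_⟩
  · rintro x (⟨i, p, h1, (h2 | h2)⟩ | ⟨i, p, h1, (h2 | h2)⟩) <;> simp_all
  · rintro x y (⟨i, p, rfl, (rfl | rfl)⟩ | ⟨i, p, rfl, (rfl | rfl)⟩)
    · exact Or.inr ⟨_, _, rfl, rfl, (fam i).mem_left p⟩
    · exact Or.inr ⟨_, _, rfl, rfl, (fam i).mem_right p⟩
    · exact Or.inl ⟨_, _, rfl, rfl, (fam i).mem_left p⟩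
    · exact Or.inl ⟨_, _, rfl, rfl, (fam i).mem_right p⟩
  · intro e
    obtain ⟨⟨i, p⟩, hip, hun⟩ := huniq e
    have hset : {x | R (Sum.inr e) x ∨ R x (Sum.inr e)}
        = {Sum.inl ((fam i).verts p.castSucc), Sum.inl ((fam i).verts p.succ)} := by
      ext x
      simp only [Set.mem_setOf_eq, Set.mem_insert_iff, Set.mem_singleton_iff]
      constructor
      · rintro (⟨j, q, h1, h2⟩ | ⟨j, q, h1, h2⟩)
        · have hjq : (⟨j, q⟩ : (i : Fin n) × Fin ((fam i).len)) = ⟨i, p⟩ :=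
            hun ⟨j, q⟩ (Sum.inr_injective h1).symm
          obtain ⟨h3, h4⟩ := Sigma.mk.inj_iff.mp hjq
          subst h3
          have h5 : q = p := eq_of_heq h4
          subst h5
          exact h2
        · rcases h2 with h2 | h2 <;> simp at h2
      · rintro (rfl | rfl)
        · exact Or.inl ⟨i, p, by rw [hip], Or.inl rfl⟩
        · exact Or.inl ⟨i, p, by rw [hip], Or.inr rfl⟩
    show ({x | R (Sum.inr e) x ∨ R x (Sum.inr e)} : Set (V ⊕ E)).ncard = 2
    rw [hset]
    apply Set.ncard_pair
    intro hcon
    exact (fam i).verts_ne p (Sum.inl_injective hcon)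
  · intro v
    set Slots := (i : Fin n) × Fin ((fam i).len) with hSlots
    set g : Slots → E := fun s => (fam s.1).edges s.2 with hg
    have hginj : Function.Injective g := by
      intro s t hst
      obtain ⟨w, hw, hu⟩ := huniq (g t)
      exact (hu s hst).trans (hu t rfl).symm
    set Pl : Set Slots := {s | (fam s.1).verts s.2.castSucc = v} with hPl
    set Pr : Set Slots := {s | (fam s.1).verts s.2.succ = v} with hPr
    have hNS : {x | R (Sum.inl v) x ∨ R x (Sum.inl v)} = Sum.inr '' (g '' (Pl ∪ Pr)) := by
      ext x
      simp only [Set.mem_setOf_eq, Set.mem_image, Set.mem_union]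
      constructor
      · rintro (⟨j, q, h1, h2⟩ | ⟨j, q, h1, h2⟩)
        · exact absurd h1 (by simp)
        · rcases h2 with h2 | h2
          · exact ⟨g ⟨j, q⟩, ⟨⟨j, q⟩, Or.inl (Sum.inl_injective h2).symm, rfl⟩, h1.symm⟩
          · exact ⟨g ⟨j, q⟩, ⟨⟨j, q⟩, Or.inr (Sum.inl_injective h2).symm, rfl⟩, h1.symm⟩
      · rintro ⟨e', ⟨⟨j, q⟩, hq, rfl⟩, rfl⟩
        rcases hq with hq | hq
        · exact Or.inr ⟨j, q, rfl, Or.inl (by rw [hq])⟩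
        · exact Or.inr ⟨j, q, rfl, Or.inr (by rw [hq])⟩
    have hdisjPP : Disjoint Pl Pr := Set.disjoint_left.mpr
      (fun s h1 h2 => (fam s.1).verts_ne s.2 (h1.trans h2.symm))
    set σ : Slots → Slots := fun s => ⟨s.1, CTprev (fam s.1) s.2⟩ with hσ
    have hσinj : Function.Injective σ := by
      rintro ⟨i, p⟩ ⟨j, q⟩ hst
      obtain ⟨h1, h2⟩ := Sigma.mk.inj_iff.mp hst
      subst h1
      have h3 : CTprev (fam i) p = CTprev (fam i) q := eq_of_heq h2
      have h4 : CTnxt (fam i) (CTprev (fam i) p) = CTnxt (fam i) (CTprev (fam i) q) := by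
        rw [h3]
      rw [CTnxt_prev, CTnxt_prev] at h4
      rw [h4]
    have himg : Pr = σ '' Pl := by
      ext s
      rcases s with ⟨i, p⟩
      simp only [hPr, hPl, hσ, Set.mem_setOf_eq, Set.mem_image]
      constructor
      · intro hp
        refine ⟨⟨i, CTnxt (fam i) p⟩, ?_, ?_⟩
        · show (fam i).verts (CTnxt (fam i) p).castSucc = v
          rw [CTnxt_castSucc]
          exact hp
        · show (⟨i, CTprev (fam i) (CTnxt (fam i) p)⟩ : Slots) = ⟨i, p⟩
          rw [CTprev_nxt]
      · rintro ⟨⟨j, q⟩, hq, heq⟩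
        obtain ⟨h1, h2⟩ := Sigma.mk.inj_iff.mp heq
        subst h1
        have h3 : CTprev (fam j) q = p := eq_of_heq h2
        rw [← h3, CTprev_succ]
        exact hq
    show Even ({x | R (Sum.inl v) x ∨ R x (Sum.inl v)} : Set (V ⊕ E)).ncard
    rw [hNS, Set.ncard_image_of_injective _ Sum.inr_injective,
      Set.ncard_image_of_injective _ hginj,
      Set.ncard_union_eq hdisjPP (Set.toFinite _) (Set.toFinite _),
      himg, Set.ncard_image_of_injective _ hσinj]
    exact ⟨Pl.ncard, rfl⟩
end Fwd

lemma backward_dir {V E : Type*} [Fintype V] [Fintype E] (F : E → Finset V)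
    (h : ∃ G' : SimpleGraph (V ⊕ E), G' ≤ incidenceGraph V E F ∧
      (∀ e : E, (G'.neighborSet (Sum.inr e)).ncard = 2) ∧
      (∀ v : V, Even ((G'.neighborSet (Sum.inl v)).ncard))) :
    HasEulerFamily V E F := by
  classical
  obtain ⟨G', hle, h2, heven⟩ := h
  have key : ∀ e : E, ∃ p : V × V, p.1 ≠ p.2 ∧ p.1 ∈ F e ∧ p.2 ∈ F e ∧
      G'.neighborSet (Sum.inr e) = {Sum.inl p.1, Sum.inl p.2} := by
    intro e
    obtain ⟨x, y, hxy, hset⟩ := Set.ncard_eq_two.mp (h2 e)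
    have hx : G'.Adj (Sum.inr e) x := by
      rw [← SimpleGraph.mem_neighborSet, hset]
      exact Set.mem_insert _ _
    have hy : G'.Adj (Sum.inr e) y := by
      rw [← SimpleGraph.mem_neighborSet, hset]
      exact Set.mem_insert_iff.mpr (Or.inr rfl)
    obtain ⟨v, hv, hxv⟩ : ∃ v, v ∈ F e ∧ x = Sum.inl v := by
      rcases hle hx with ⟨v', e', h1', h2', h3'⟩ | ⟨v', e', h1', h2', h3'⟩
      · exact absurd h1' (by simp)
      · rw [Sum.inr.injEq] at h1'
        exact ⟨v', by rw [h1']; exact h3', h2'⟩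
    obtain ⟨w, hw, hyw⟩ : ∃ w, w ∈ F e ∧ y = Sum.inl w := by
      rcases hle hy with ⟨v', e', h1', h2', h3'⟩ | ⟨v', e', h1', h2', h3'⟩
      · exact absurd h1' (by simp)
      · rw [Sum.inr.injEq] at h1'
        exact ⟨v', by rw [h1']; exact h3', h2'⟩
    refine ⟨(v, w), ?_, hv, hw, ?_⟩
    · intro hvw
      apply hxy
      rw [hxv, hyw]
      exact congrArg Sum.inl hvw
    · rw [hset, hxv, hyw]
  choose P hP1 hP2 hP3 hP4 using key
  set A : E → V := fun e => (P e).1 with hA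
  set B : E → V := fun e => (P e).2 with hB
  have hab : ∀ e, A e ≠ B e := hP1
  have hadj : ∀ (v : V) (e : E), G'.Adj (Sum.inl v) (Sum.inr e) ↔ (v = A e ∨ v = B e) := by
    intro v e
    rw [SimpleGraph.adj_comm, ← SimpleGraph.mem_neighborSet, hP4 e]
    simp only [Set.mem_insert_iff, Set.mem_singleton_iff, Sum.inl.injEq]
    exact Iff.rfl
  have hevenA : ∀ v : V, Even (((Finset.univ : Finset E).filter
      (fun e => v = A e ∨ v = B e)).card) := by
    intro v
    have h1 : G'.neighborSet (Sum.inl v) = Sum.inr '' {e : E | v = A e ∨ v = B e} := by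
      ext x
      simp only [SimpleGraph.mem_neighborSet, Set.mem_image, Set.mem_setOf_eq]
      constructor
      · intro hx
        rcases hle hx with ⟨v', e', h1', h2', h3'⟩ | ⟨v', e', h1', h2', h3'⟩
        · refine ⟨e', ?_, h2'.symm⟩
          rw [h2'] at hx
          exact (hadj v e').mp hx
        · exact absurd h1' (by simp)
      · rintro ⟨e, hinc, rfl⟩
        exact (hadj v e).mpr hinc
    have h2' := heven v
    rw [h1, Set.ncard_image_of_injective _ Sum.inr_injective] at h2'
    have h3' : {e : E | v = A e ∨ v = B e}
        = ↑(Finset.univ.filter (fun e => v = A e ∨ v = B e)) := by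
      ext e; simp
    rwa [h3', Set.ncard_coe_finset] at h2'
  obtain ⟨Ls, hLsA, hLsP, hLsC⟩ := exists_family (A := A) (B := B) hab
    (Finset.univ.card) Finset.univ le_rfl hevenA
  have hget : ∀ i : Fin Ls.length, Ls.get i ∈ Ls := fun i => Ls.get_mem i
  set fam : Fin Ls.length → ClosedTrail V E F := fun i =>
    { len := (Ls.get i).len,
      two_le_len := (Ls.get i).two_le_of_closed (hLsA _ (hget i)).1,
      verts := (Ls.get i).verts,
      edges := (Ls.get i).edges,
      mem_left := fun p => by
        rcases (Ls.get i).incL p with hh | hh <;> rw [hh]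
        · exact hP2 _
        · exact hP3 _,
      mem_right := fun p => by
        rcases (Ls.get i).incR p with hh | hh <;> rw [hh]
        · exact hP2 _
        · exact hP3 _,
      verts_ne := (Ls.get i).vne,
      edges_injective := (Ls.get i).inj,
      closed := (hLsA _ (hget i)).1 } with hfam
  have hpg := List.pairwise_iff_get.mp hLsP
  refine ⟨Ls.length, fam, ?_, ?_⟩
  · intro i j hij a b
    rcases lt_or_gt_of_ne hij with hlt | hlt
    · exact hpg i j hlt a b
    · intro hcon
      exact hpg j i hlt b a hcon.symm
  · intro e
    obtain ⟨T', hT', i0, hi0⟩ := hLsC e (Finset.mem_univ e)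
    obtain ⟨k, hk⟩ := List.mem_iff_get.mp hT'
    subst hk
    refine ⟨⟨k, i0⟩, hi0, ?_⟩
    rintro ⟨j, q⟩ hq
    have hq' : (Ls.get j).edges q = e := hq
    by_cases hjk : j = k
    · subst hjk
      have hqi : q = i0 := (Ls.get j).inj (hq'.trans hi0.symm)
      rw [hqi]
    · exfalso
      obtain ⟨r1, hr1⟩ := (Ls.get j).exists_anchor_A q
      obtain ⟨r2, hr2⟩ := (Ls.get k).exists_anchor_A i0
      rcases lt_or_gt_of_ne hjk with hlt | hlt
      · exact hpg j k hlt r1 r2 (by rw [hr1, hr2, hq', hi0])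
      · exact hpg k j hlt r2 r1 (by rw [hr2, hr1, hq', hi0])

/-- A hypergraph `H` is quasi-eulerian (empty or admits an Euler
family) iff its incidence graph has a spanning subgraph `G'` in which every
e-vertex has degree 2 and every v-vertex has even degree. -/
theorem quasiEulerian_iff_incidence {V E : Type*} [Fintype V] [Nonempty V] [Fintype E]
    (F : E → Finset V) :
    (IsEmpty E ∨ HasEulerFamily V E F) ↔
      ∃ G' : SimpleGraph (V ⊕ E), G' ≤ incidenceGraph V E F ∧
        (∀ e : E, (G'.neighborSet (Sum.inr e)).ncard = 2) ∧
        (∀ v : V, Even ((G'.neighborSet (Sum.inl v)).ncard)) := by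
  constructor
  · rintro (hemp | hfam)
    · refine ⟨⊥, bot_le, fun e => (hemp.false e).elim, fun v => ?_⟩
      have hns : (⊥ : SimpleGraph (V ⊕ E)).neighborSet (Sum.inl v) = ∅ := by
        ext x; simp
      rw [hns]
      simp
    · exact forward_dir F hfam
  · intro hh
    exact Or.inr (backward_dir F hh)
end

section
/- Let k ≥ 4, and let H be a 2-covering k-hypergraph with at least two edges. Then H has no cut edges. -/
/-- For `k ≥ 4`, a 2-covering k-hypergraph with at least two
edges has no cut edges. -/
theorem twoCovering_no_cut_edges {V E : Type*} [Fintype V] [Nonempty V] [Fintype E]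
    (k : ℕ) (hk : 4 ≤ k)
    (F : E → Finset V)
    (hcov : IsCoveringHypergraph V E F 2 k)
    (hE : 2 ≤ Fintype.card E) :
    ∀ e : E, ¬ IsCutEdge V E F e := by
  classical
  intro e hcut
  obtain ⟨huni, hcov2⟩ := hcov
  obtain ⟨g, hg⟩ : ∃ g : E, g ≠ e := by
    by_contra h
    push_neg at h
    have : Fintype.card E ≤ 1 :=
      Fintype.card_le_one_iff.2 (fun x y => (h x).trans (h y).symm)
    omega
  set R := HypAdj V {e' : E // e' ≠ e} (fun e' => F e'.1) with hR
  have step : ∀ x y : V, (∃ f : E, f ≠ e ∧ x ∈ F f ∧ y ∈ F f) →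
      Quot.mk R x = Quot.mk R y := by
    rintro x y ⟨f, hf, hx, hy⟩
    exact Quot.sound ⟨⟨f, hf⟩, hx, hy⟩
  have key : ∀ a b : V, Quot.mk R a = Quot.mk R b := by
    intro a b
    by_cases hab : a = b
    · rw [hab]
    obtain ⟨f, hf⟩ := hcov2 {a, b} (Finset.card_pair hab)
    have ha : a ∈ F f := hf (by simp)
    have hb : b ∈ F f := hf (by simp)
    by_cases hfe : f = e
    · subst hfe
      by_cases hge : F g ⊆ F f
      · have hgf : F g = F f :=
          Finset.eq_of_subset_of_card_le hge (by rw [huni, huni])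
        exact step a b ⟨g, hg, hgf ▸ ha, hgf ▸ hb⟩
      · obtain ⟨c, hcg, hce⟩ := Finset.not_subset.mp hge
        have hca : c ≠ a := fun h => hce (h ▸ ha)
        have hcb : c ≠ b := fun h => hce (h ▸ hb)
        obtain ⟨f1, hf1⟩ := hcov2 {a, c} (Finset.card_pair (Ne.symm hca))
        obtain ⟨f2, hf2⟩ := hcov2 {c, b} (Finset.card_pair hcb)
        have hf1e : f1 ≠ f := fun h => hce (h ▸ hf1 (by simp))
        have hf2e : f2 ≠ f := fun h => hce (h ▸ hf2 (by simp))
        exact (step a c ⟨f1, hf1e, hf1 (by simp), hf1 (by simp)⟩).trans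
          (step c b ⟨f2, hf2e, hf2 (by simp), hf2 (by simp)⟩)
    · exact step a b ⟨f, hfe, ha, hb⟩
  have hsub : Subsingleton (Quot R) := by
    constructor
    intro x y
    induction x using Quot.ind
    induction y using Quot.ind
    exact key _ _
  have h1 : numComponents V {e' : E // e' ≠ e} (fun e' => F e'.1) ≤ 1 := by
    unfold numComponents
    exact Finite.card_le_one_iff_subsingleton.mpr hsub
  have h2 : 1 ≤ numComponents V E F := by
    unfold numComponents
    have : Nonempty (Quot (HypAdj V E F)) := ⟨Quot.mk _ (Classical.arbitrary V)⟩
    exact Nat.one_le_iff_ne_zero.2 (Nat.card_ne_zero.2 ⟨this, Quot.finite _⟩)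
  exact absurd hcut (not_lt.2 (h1.trans h2))
end

section
/- Let k ≥ 4, and let H be a 2-covering k-hypergraph of order n and size m with n > 3k/2 and m ≥ 2. Then m ≥ 2·⌊(n+3)/k⌋. -/
/-- For `k ≥ 4`, a 2-covering k-hypergraph of order `n > 3k/2`
and size `m ≥ 2` satisfies `m ≥ 2⌊(n+3)/k⌋`. -/
theorem twoCovering_size_lower_bound {V E : Type*} [Fintype V] [Nonempty V] [Fintype E]
    (k : ℕ) (hk : 4 ≤ k)
    (F : E → Finset V)
    (hcov : IsCoveringHypergraph V E F 2 k)
    (hn : 3 * k < 2 * Fintype.card V)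
    (hm : 2 ≤ Fintype.card E) :
    2 * ((Fintype.card V + 3) / k) ≤ Fintype.card E := by
  classical
  obtain ⟨huni, hcov2⟩ := hcov
  set n := Fintype.card V with hn_def
  set m := Fintype.card E with hm_def
  set deg : V → ℕ := fun v => (Finset.univ.filter (fun e => v ∈ F e)).card with hdeg_def
  -- degree lower bound: (n-1) ≤ deg v * (k-1)
  have hdeg : ∀ v : V, n - 1 ≤ deg v * (k - 1) := by
    intro v
    have hsub : Finset.univ.erase v ⊆
        (Finset.univ.filter (fun e => v ∈ F e)).biUnion (fun e => (F e).erase v) := by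
      intro u hu
      have huv : u ≠ v := Finset.ne_of_mem_erase hu
      obtain ⟨e, he⟩ := hcov2 {v, u} (Finset.card_pair (Ne.symm huv))
      have hv : v ∈ F e := he (Finset.mem_insert_self _ _)
      have hu' : u ∈ F e := he (by simp)
      exact Finset.mem_biUnion.mpr ⟨e, Finset.mem_filter.mpr ⟨Finset.mem_univ _, hv⟩,
        Finset.mem_erase.mpr ⟨huv, hu'⟩⟩
    have h1 : (Finset.univ.erase v).card ≤
        ((Finset.univ.filter (fun e => v ∈ F e)).biUnion (fun e => (F e).erase v)).card :=
      Finset.card_le_card hsub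
    have h2 : ((Finset.univ.filter (fun e => v ∈ F e)).biUnion (fun e => (F e).erase v)).card ≤
        ∑ e ∈ Finset.univ.filter (fun e => v ∈ F e), ((F e).erase v).card :=
      Finset.card_biUnion_le
    have h3 : ∑ e ∈ Finset.univ.filter (fun e => v ∈ F e), ((F e).erase v).card
        = deg v * (k - 1) := by
      rw [Finset.sum_congr rfl (fun e he => ?_), Finset.sum_const, smul_eq_mul]
      have hve : v ∈ F e := (Finset.mem_filter.mp he).2
      rw [Finset.card_erase_of_mem hve, huni e]
    have h4 : (Finset.univ.erase v).card = n - 1 := by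
      rw [Finset.card_erase_of_mem (Finset.mem_univ v), Finset.card_univ]
    omega
  -- double counting
  have hsum : ∑ e : E, (F e).card = ∑ v : V, deg v :=
    calc ∑ e : E, (F e).card
        = ∑ e : E, ∑ v : V, if v ∈ F e then 1 else 0 :=
          Finset.sum_congr rfl fun e _ => by
            rw [← Finset.card_filter]; congr 1; ext u; simp
      _ = ∑ v : V, ∑ e : E, if v ∈ F e then 1 else 0 := Finset.sum_comm
      _ = ∑ v : V, deg v := Finset.sum_congr rfl fun v _ => (Finset.card_filter _ _).symm
  have hmk : ∑ v : V, deg v = m * k := by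
    rw [← hsum, Finset.sum_congr rfl fun e _ => huni e, Finset.sum_const,
      Finset.card_univ, smul_eq_mul]
  have hcount : ∀ c : ℕ, (∀ v : V, c ≤ deg v) → n * c ≤ m * k := by
    intro c hc
    calc n * c = ∑ _v : V, c := by rw [Finset.sum_const, Finset.card_univ, smul_eq_mul]
      _ ≤ ∑ v : V, deg v := Finset.sum_le_sum fun v _ => hc v
      _ = m * k := hmk
  set t := (n + 3) / k with ht_def
  have htk : t * k ≤ n + 3 := Nat.div_mul_le_self _ _
  by_contra hlt
  push_neg at hlt
  have ht2 : 2 ≤ t := by omega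
  rcases eq_or_lt_of_le ht2 with ht2' | ht3
  · -- t = 2 : show each degree ≥ 2 and derive contradiction
    have hnk : k + 1 ≤ n := by omega
    have hd2 : ∀ v : V, 2 ≤ deg v := by
      intro v
      by_contra hd
      push_neg at hd
      have := hdeg v
      have : deg v * (k - 1) ≤ 1 * (k - 1) := Nat.mul_le_mul_right _ (by omega)
      omega
    have h2n : n * 2 ≤ m * k := hcount 2 hd2
    have hm3 : m ≤ 3 := by omega
    have : m * k ≤ 3 * k := Nat.mul_le_mul_right _ hm3
    omega
  · -- t ≥ 3
    obtain ⟨s, hs⟩ : ∃ s, t = s + 3 := ⟨t - 3, by omega⟩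
    rw [hs] at htk hlt
    have hntk : (s + 3) * k ≤ n + 3 := htk
    have hn2k : 2 * k ≤ n := by nlinarith
    have hd3 : ∀ v : V, 3 ≤ deg v := by
      intro v
      by_contra hd
      push_neg at hd
      have := hdeg v
      have : deg v * (k - 1) ≤ 2 * (k - 1) := Nat.mul_le_mul_right _ (by omega)
      omega
    have h3n : n * 3 ≤ m * k := hcount 3 hd3
    have hm' : m ≤ 2 * s + 5 := by omega
    have hmk' : m * k ≤ (2 * s + 5) * k := Nat.mul_le_mul_right _ hm'
    nlinarith
end

section
/- Let H be a hypergraph with at least two edges such that every two edges of H intersect in at least 2 vertices, and such that there exist two distinct edges e, f of H with |e ∩ f| ≥ 3. Then H admits an Euler tour. -/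
noncomputable def pickV {V : Type*} [Nonempty V] (s : Finset V) : V :=
  if h : s.Nonempty then h.choose else Classical.arbitrary V

lemma pickV_mem {V : Type*} [Nonempty V] {s : Finset V} (h : s.Nonempty) : pickV s ∈ s := by
  rw [pickV, dif_pos h]; exact h.choose_spec

noncomputable def gAux {V : Type*} [Nonempty V] [DecidableEq V] (S : ℕ → Finset V) : ℕ → V
  | 0 => Classical.arbitrary V
  | j + 1 => pickV (S j \ {gAux S j})

/-- A hypergraph with at least two edges in which every two edges
share at least 2 vertices, and some two distinct edges share at least 3
vertices, admits an Euler tour. -/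
theorem eulerTour_of_intersections {V E : Type*} [Fintype V] [Nonempty V] [Fintype E]
    [DecidableEq V]
    (F : E → Finset V)
    (hE : 2 ≤ Fintype.card E)
    (h2 : ∀ e f : E, 2 ≤ (F e ∩ F f).card)
    (h3 : ∃ e f : E, e ≠ f ∧ 3 ≤ (F e ∩ F f).card) :
    HasEulerTour V E F := by
  classical
  obtain ⟨e, f, hef, h3⟩ := h3
  set m := Fintype.card E with hmdef
  have hm : 2 ≤ m := hE
  have h0m : 0 < m := by omega
  let τ : Fin m ≃ E := (Fintype.equivFinOfCardEq hmdef.symm).symm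
  let i0 : Fin m := ⟨0, h0m⟩
  let i1 : Fin m := ⟨m - 1, by omega⟩
  have hi01 : i0 ≠ i1 := by
    simp only [i0, i1, Ne, Fin.mk.injEq]
    omega
  have hab : τ.symm e ≠ τ.symm f := fun h => hef (by simpa using congrArg τ h)
  let π1 := Equiv.swap i0 (τ.symm e)
  set c := π1.symm (τ.symm f) with hc
  have hπ1c : π1 c = τ.symm f := Equiv.apply_symm_apply π1 _
  have hci0 : c ≠ i0 := by
    intro h
    rw [h] at hπ1c
    have : π1 i0 = τ.symm e := Equiv.swap_apply_left _ _
    exact hab (this ▸ hπ1c)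
  let σ : Fin m ≃ E := ((Equiv.swap i1 c).trans π1).trans τ
  have hσ0 : σ i0 = e := by
    have h1 : Equiv.swap i1 c i0 = i0 :=
      Equiv.swap_apply_of_ne_of_ne hi01 (Ne.symm hci0)
    show τ (π1 (Equiv.swap i1 c i0)) = e
    rw [h1]
    show τ (Equiv.swap i0 (τ.symm e) i0) = e
    rw [Equiv.swap_apply_left, Equiv.apply_symm_apply]
  have hσ1 : σ i1 = f := by
    show τ (π1 (Equiv.swap i1 c i1)) = f
    rw [Equiv.swap_apply_left, hπ1c, Equiv.apply_symm_apply]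
  let d : ℕ → E := fun j => σ ⟨j % m, Nat.mod_lt j h0m⟩
  have hd : ∀ i : Fin m, d i.val = σ i := by
    intro i
    simp only [d]
    congr 1
    exact Fin.ext (Nat.mod_eq_of_lt i.isLt)
  have hdm : d m = d 0 := by simp [d, Nat.mod_self]
  set S : ℕ → Finset V := fun j => F (d j) ∩ F (d (j + 1)) with hSdef
  have hS2 : ∀ j, 2 ≤ (S j).card := fun j => h2 _ _
  set g := gAux S with hgdef
  have hg : ∀ j, g (j + 1) ∈ S j ∧ g (j + 1) ≠ g j := by
    intro j
    obtain ⟨y, hy, hne⟩ := Finset.exists_mem_ne (s := S j) (by have := hS2 j; omega) (g j)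
    have hne' : (S j \ {g j}).Nonempty := ⟨y, Finset.mem_sdiff.2 ⟨hy, by simpa using hne⟩⟩
    have hmem : g (j + 1) ∈ S j \ {g j} := by
      rw [hgdef]
      show pickV (S j \ {gAux S j}) ∈ _
      rw [← hgdef]
      exact pickV_mem hne'
    exact ⟨(Finset.mem_sdiff.1 hmem).1, by simpa using (Finset.mem_sdiff.1 hmem).2⟩
  have hm1 : m - 1 + 1 = m := by omega
  have hdm1 : d (m - 1) = f := by
    have : (m - 1 : ℕ) = (i1 : Fin m).val := rfl
    rw [this, hd i1, hσ1]
  have hd0 : d 0 = e := by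
    have : (0 : ℕ) = (i0 : Fin m).val := rfl
    rw [this, hd i0, hσ0]
  have hT3 : 3 ≤ (S (m - 1)).card := by
    have : S (m - 1) = F f ∩ F e := by
      rw [hSdef]
      simp only
      rw [hm1, hdm, hdm1, hd0]
    rw [this, Finset.inter_comm]
    exact h3
  set v0 := pickV (S (m - 1) \ {g (m - 1), g 1}) with hv0def
  have hv0 : v0 ∈ S (m - 1) ∧ v0 ≠ g (m - 1) ∧ v0 ≠ g 1 := by
    have hcard : ({g (m - 1), g 1} : Finset V).card ≤ 2 :=
      (Finset.card_insert_le _ _).trans (by simp)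
    have hle := Finset.le_card_sdiff ({g (m - 1), g 1} : Finset V) (S (m - 1))
    have hpos : 0 < (S (m - 1) \ {g (m - 1), g 1}).card := by omega
    have hmem : v0 ∈ S (m - 1) \ {g (m - 1), g 1} := pickV_mem (Finset.card_pos.1 hpos)
    obtain ⟨h1, h2'⟩ := Finset.mem_sdiff.1 hmem
    simp only [Finset.mem_insert, Finset.mem_singleton, not_or] at h2'
    exact ⟨h1, h2'.1, h2'.2⟩
  set w : ℕ → V := fun j => if j = 0 ∨ j = m then v0 else g j with hwdef
  have hw0 : w 0 = v0 := by simp [hwdef]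
  have hwm : w m = v0 := by simp [hwdef]
  have hwmid : ∀ j, j ≠ 0 → j ≠ m → w j = g j := by
    intro j hj0 hjm
    simp [hwdef, hj0, hjm]
  refine ⟨⟨m, hm, fun i => w i.val, fun i => σ i, ?_, ?_, ?_, σ.injective, ?_⟩, σ.bijective⟩
  · -- mem_left
    intro i
    show w i.castSucc.val ∈ F (σ i)
    rw [Fin.coe_castSucc, ← hd i]
    rcases Nat.eq_zero_or_pos i.val with h0 | hpos
    · rw [h0, hw0]
      have h' : v0 ∈ F (d (m - 1 + 1)) := (Finset.mem_inter.1 hv0.1).2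
      rw [hm1, hdm] at h'
      exact h'
    · rw [hwmid i.val (by omega) (by have := i.isLt; omega)]
      obtain ⟨j, hj⟩ : ∃ j, i.val = j + 1 := ⟨i.val - 1, by omega⟩
      rw [hj]
      exact (Finset.mem_inter.1 (hg j).1).2
  · -- mem_right
    intro i
    show w i.succ.val ∈ F (σ i)
    rw [Fin.val_succ, ← hd i]
    by_cases hiv : i.val + 1 = m
    · rw [hiv, hwm]
      have h' : v0 ∈ F (d (m - 1)) := (Finset.mem_inter.1 hv0.1).1
      have : i.val = m - 1 := by omega
      rw [this]
      exact h'
    · rw [hwmid (i.val + 1) (by omega) hiv]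
      exact (Finset.mem_inter.1 (hg i.val).1).1
  · -- verts_ne
    intro i
    show w i.castSucc.val ≠ w i.succ.val
    rw [Fin.coe_castSucc, Fin.val_succ]
    rcases Nat.eq_zero_or_pos i.val with h0 | hpos
    · rw [h0, hw0, hwmid 1 (by omega) (by omega)]
      exact hv0.2.2
    · by_cases hiv : i.val + 1 = m
      · rw [hiv, hwm, hwmid i.val (by omega) (by omega)]
        have : i.val = m - 1 := by omega
        rw [this]
        exact (Ne.symm hv0.2.1)
      · rw [hwmid i.val (by omega) (by have := i.isLt; omega),
          hwmid (i.val + 1) (by omega) hiv]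
        exact Ne.symm (hg i.val).2
  · -- closed
    show w (0 : Fin (m + 1)).val = w (Fin.last m).val
    rw [Fin.val_zero, Fin.val_last, hw0, hwm]
end

section
/- Let k ≥ 4, and let H be a 2-covering k-hypergraph of order n with at least two edges. If n ≤ 2k−3 or (k, n) = (4, 6), then H admits an Euler tour. -/
lemma euler_greedy {V : Type*} [Nonempty V] (m : ℕ) (hm : 2 ≤ m) (S : ℕ → Finset V)
    (h2 : ∀ i, i < m → 2 ≤ (S i).card)
    (h3 : 3 ≤ (S (m-1)).card ∨ m = 2) :
    ∃ w : ℕ → V, (∀ i, i < m → w i ∈ S i) ∧ (∀ i, i < m → w ((i+1) % m) ≠ w i) := by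
  classical
  obtain ⟨w0, hw0⟩ := Finset.card_pos.mp (show 0 < (S 0).card by have := h2 0 (by omega); omega)
  set pick : Finset V → V := fun s => if h : s.Nonempty then h.choose else Classical.arbitrary V with hpick
  have pick_mem : ∀ s : Finset V, s.Nonempty → pick s ∈ s := by
    intro s h
    simp only [hpick, dif_pos h]
    exact h.choose_spec
  set f : ℕ → V := fun n =>
    Nat.rec w0 (fun i fi => pick (S (i+1) \ (if i+1 = m-1 then {fi, w0} else {fi}))) n with hf
  have hf0 : f 0 = w0 := rfl
  have hfs : ∀ i, f (i+1) = pick (S (i+1) \ (if i+1 = m-1 then {f i, w0} else {f i})) :=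
    fun i => rfl
  have hne : ∀ i, i + 1 < m → (S (i+1) \ (if i+1 = m-1 then {f i, w0} else {f i})).Nonempty := by
    intro i hi
    rw [← Finset.card_pos]
    have hcard2 := h2 (i+1) hi
    have hsub := Finset.le_card_sdiff (if i+1 = m-1 then {f i, w0} else ({f i} : Finset V)) (S (i+1))
    by_cases hcase : i + 1 = m - 1
    · rw [if_pos hcase] at hsub
      rcases h3 with h3 | h3
      · have hle : ({f i, w0} : Finset V).card ≤ 2 := by
          apply le_trans (Finset.card_insert_le _ _)
          simp
        rw [← hcase] at h3
        rw [if_pos hcase]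
        omega
      · have hi0 : i = 0 := by omega
        subst hi0
        rw [if_pos hcase]
        have : ({f 0, w0} : Finset V) = {w0} := by rw [hf0]; simp
        rw [this] at hsub ⊢
        simp only [Finset.card_singleton] at hsub
        omega
    · rw [if_neg hcase] at hsub ⊢
      simp only [Finset.card_singleton] at hsub
      omega
  have hmem : ∀ i, i < m → f i ∈ S i := by
    intro i hi
    cases i with
    | zero => exact hw0
    | succ j =>
      rw [hfs j]
      exact (Finset.mem_sdiff.1 (pick_mem _ (hne j hi))).1
  have hstep : ∀ i, i + 1 < m →
      f (i+1) ∉ (if i+1 = m-1 then ({f i, w0} : Finset V) else {f i}) := by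
    intro i hi
    rw [hfs i]
    exact (Finset.mem_sdiff.1 (pick_mem _ (hne i hi))).2
  have hadj : ∀ i, i + 1 < m → f (i+1) ≠ f i := by
    intro i hi hEq
    apply hstep i hi
    by_cases hcase : i + 1 = m - 1
    · rw [if_pos hcase, hEq]; exact Finset.mem_insert_self _ _
    · rw [if_neg hcase, hEq]; exact Finset.mem_singleton_self _
  have hlast : f (m-1) ≠ w0 := by
    intro hEq
    have hi : (m-2) + 1 < m := by omega
    have hc : (m-2) + 1 = m - 1 := by omega
    have := hstep (m-2) hi
    rw [if_pos hc, hc] at this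
    exact this (hEq ▸ Finset.mem_insert_of_mem (Finset.mem_singleton_self _))
  refine ⟨f, hmem, ?_⟩
  intro i hi
  by_cases hi1 : i + 1 < m
  · rw [Nat.mod_eq_of_lt hi1]
    exact hadj i hi1
  · have : i = m - 1 := by omega
    subst this
    have : (m - 1 + 1) % m = 0 := by
      have h1 : m - 1 + 1 = m := by omega
      rw [h1, Nat.mod_self]
    rw [this, hf0]
    exact fun h => hlast h.symm

lemma euler_buildTour {V E : Type*} [DecidableEq V] (F : E → Finset V) (m : ℕ) (hm : 2 ≤ m)
    (g : Fin m ≃ E) (w : ℕ → V)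
    (hS : ∀ i (h : i < m), w i ∈ F (g ⟨i, h⟩) ∩ F (g ⟨(i+1) % m, Nat.mod_lt _ (by omega)⟩))
    (hw2 : ∀ i, i < m → w ((i+1) % m) ≠ w i) :
    HasEulerTour V E F := by
  have hm0 : 0 < m := by omega
  have hmod : ∀ i : Fin m, ((i.1 + (m-1)) % m + 1) % m = i.1 := by
    intro i
    rw [Nat.mod_add_mod]
    have h1 : i.1 + (m-1) + 1 = i.1 + m := by omega
    rw [h1, Nat.add_mod_right, Nat.mod_eq_of_lt i.2]
  have hsucc : ∀ i : Fin m, (i.1 + 1 + (m-1)) % m = i.1 := by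
    intro i
    have h1 : i.1 + 1 + (m-1) = i.1 + m := by omega
    rw [h1, Nat.add_mod_right, Nat.mod_eq_of_lt i.2]
  have memL : ∀ i : Fin m, w ((i.1 + (m-1)) % m) ∈ F (g i) := by
    intro i
    have hp : (i.1 + (m-1)) % m < m := Nat.mod_lt _ hm0
    have h := (Finset.mem_inter.1 (hS _ hp)).2
    have he : (⟨((i.1 + (m-1)) % m + 1) % m, Nat.mod_lt _ hm0⟩ : Fin m) = i := Fin.ext (hmod i)
    rwa [he] at h
  have memR : ∀ i : Fin m, w ((i.1 + 1 + (m-1)) % m) ∈ F (g i) := by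
    intro i
    rw [hsucc i]
    have h := (Finset.mem_inter.1 (hS i.1 i.2)).1
    simpa using h
  refine ⟨{ len := m
            two_le_len := hm
            verts := fun j => w ((j.1 + (m-1)) % m)
            edges := fun i => g i
            mem_left := fun i => memL i
            mem_right := fun i => by simpa [Fin.val_succ] using memR i
            verts_ne := ?_
            edges_injective := fun a b h => g.injective h
            closed := ?_ }, g.bijective⟩
  · intro i
    simp only [Fin.coe_castSucc, Fin.val_succ]
    rw [hsucc i]
    have hp : (i.1 + (m-1)) % m < m := Nat.mod_lt _ hm0
    have h := hw2 _ hp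
    rw [hmod i] at h
    exact h.symm
  · simp only [Fin.val_last, Fin.val_zero]
    congr 1
    rw [Nat.zero_add, Nat.mod_eq_of_lt (by omega), Nat.add_mod_left, Nat.mod_eq_of_lt (by omega)]

/-- For `k ≥ 4`, a 2-covering k-hypergraph of order `n` with at
least two edges admits an Euler tour provided `n ≤ 2k−3` or `(k,n) = (4,6)`. -/
theorem twoCovering_smallOrder_eulerTour {V E : Type*} [Fintype V] [Nonempty V] [Fintype E]
    (k : ℕ) (hk : 4 ≤ k)
    (F : E → Finset V)
    (hcov : IsCoveringHypergraph V E F 2 k)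
    (hE : 2 ≤ Fintype.card E)
    (hn : Fintype.card V ≤ 2 * k - 3 ∨ (k = 4 ∧ Fintype.card V = 6)) :
    HasEulerTour V E F := by
  classical
  set m := Fintype.card E with hmdef
  clear_value m
  have hm : 2 ≤ m := hE
  have hm0 : 0 < m := by omega
  have hface := hcov.1
  have hinter : ∀ e f : E, 2 * k ≤ (F e ∩ F f).card + Fintype.card V := by
    intro e f
    have h1 := Finset.card_inter_add_card_union (F e) (F f)
    have h2 : (F e ∪ F f).card ≤ Fintype.card V := by
      have := Finset.card_le_card (Finset.subset_univ (F e ∪ F f))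
      simpa using this
    have he := hface e
    have hf := hface f
    omega
  have hn2 : Fintype.card V ≤ 2 * k - 2 := by rcases hn with h | ⟨h1, h2⟩ <;> omega
  have h2card : ∀ e f : E, 2 ≤ (F e ∩ F f).card := by
    intro e f; have := hinter e f; omega
  have g0 : Fin m ≃ E := (finCongr hmdef).trans (Fintype.equivFin E).symm
  have master : ∀ g : Fin m ≃ E,
      (3 ≤ (F (g ⟨m-1, by omega⟩) ∩ F (g ⟨0, hm0⟩)).card ∨ m = 2) → HasEulerTour V E F := by
    intro g hg
    set S : ℕ → Finset V := fun i =>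
      F (g ⟨i % m, Nat.mod_lt _ hm0⟩) ∩ F (g ⟨(i+1) % m, Nat.mod_lt _ hm0⟩) with hSdef
    have hS2 : ∀ i, i < m → 2 ≤ (S i).card := fun i hi => h2card _ _
    have hS3 : 3 ≤ (S (m-1)).card ∨ m = 2 := by
      rcases hg with hg | hg
      · left
        have e1 : (⟨(m-1) % m, Nat.mod_lt _ hm0⟩ : Fin m) = ⟨m-1, by omega⟩ :=
          Fin.ext (Nat.mod_eq_of_lt (by omega))
        have e2 : (⟨(m-1+1) % m, Nat.mod_lt _ hm0⟩ : Fin m) = ⟨0, hm0⟩ := by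
          apply Fin.ext
          show (m-1+1) % m = 0
          have h1 : m - 1 + 1 = m := by omega
          rw [h1, Nat.mod_self]
        rw [hSdef]
        simp only
        rw [e1, e2]
        exact hg
      · right; exact hg
    obtain ⟨w, hw1, hw2⟩ := euler_greedy m hm S hS2 hS3
    apply euler_buildTour F m hm g w ?_ hw2
    intro i hi
    have hwi := hw1 i hi
    rw [hSdef] at hwi
    simp only at hwi
    have e1 : (⟨i % m, Nat.mod_lt _ hm0⟩ : Fin m) = ⟨i, hi⟩ := Fin.ext (Nat.mod_eq_of_lt hi)
    rwa [e1] at hwi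
  rcases hn with hsmall | ⟨hk4, hn6⟩
  · apply master g0
    left
    have := hinter (g0 ⟨m-1, by omega⟩) (g0 ⟨0, hm0⟩)
    omega
  · subst hk4
    by_cases hbig : ∃ e f : E, e ≠ f ∧ 3 ≤ (F e ∩ F f).card
    · obtain ⟨e, f, hef, h3⟩ := hbig
      set a : Fin m := g0.symm f with ha
      set b : Fin m := g0.symm e with hb
      have hab : a ≠ b := by
        intro h
        apply hef
        have := congrArg g0 h
        rw [ha, hb] at this
        simpa using this.symm
      set i0 : Fin m := ⟨0, hm0⟩ with hi0
      set i1 : Fin m := ⟨m-1, by omega⟩ with hi1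
      have h01 : i0 ≠ i1 := by
        rw [hi0, hi1]
        intro h
        have := congrArg Fin.val h
        simp at this
        omega
      set s1 := Equiv.swap i0 a with hs1
      set c : Fin m := s1 b with hc
      have hc0 : c ≠ i0 := by
        intro h
        apply hab
        have h2 : s1 c = s1 i0 := congrArg s1 h
        rw [hc, hs1, Equiv.swap_apply_self, Equiv.swap_apply_left] at h2
        exact h2.symm
      set σ : Equiv.Perm (Fin m) := (Equiv.swap i1 c).trans s1 with hσ
      have hσ0 : σ i0 = a := by
        rw [hσ, Equiv.trans_apply, Equiv.swap_apply_of_ne_of_ne h01 hc0.symm, hs1,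
          Equiv.swap_apply_left]
      have hσ1 : σ i1 = b := by
        rw [hσ, Equiv.trans_apply, Equiv.swap_apply_left, hc, hs1, Equiv.swap_apply_self]
      apply master (σ.trans g0)
      left
      have ea : (σ.trans g0) ⟨m-1, by omega⟩ = e := by
        show g0 (σ ⟨m-1, by omega⟩) = e
        rw [show (⟨m-1, by omega⟩ : Fin m) = i1 from rfl, hσ1, hb]
        simp
      have eb : (σ.trans g0) ⟨0, hm0⟩ = f := by
        show g0 (σ ⟨0, hm0⟩) = f
        rw [show (⟨0, hm0⟩ : Fin m) = i0 from rfl, hσ0, ha]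
        simp
      rw [ea, eb]
      exact h3
    · push_neg at hbig
      have hex : ∀ e f : E, e ≠ f → (F e ∩ F f).card = 2 := by
        intro e f hef
        have h1 := hbig e f hef
        have := h2card e f
        omega
      have huniv : ∀ e f : E, e ≠ f → F e ∪ F f = Finset.univ := by
        intro e f hef
        apply Finset.eq_univ_of_card
        have h1 := Finset.card_inter_add_card_union (F e) (F f)
        rw [hex e f hef] at h1
        have he := hface e
        have hf := hface f
        omega
      set cpl : E → Finset V := fun e => Finset.univ \ F e with hcdef
      have hcc : ∀ e, (cpl e).card = 2 := by
        intro e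
        rw [hcdef]
        simp only
        rw [Finset.card_sdiff_of_subset (Finset.subset_univ _), Finset.card_univ, hface e, hn6]
      have hdisj : ∀ e f : E, e ≠ f → Disjoint (cpl e) (cpl f) := by
        intro e f hef
        rw [Finset.disjoint_left]
        intro x hx hy
        rw [hcdef] at hx hy
        simp only [Finset.mem_sdiff, Finset.mem_univ, true_and] at hx hy
        have : x ∈ F e ∪ F f := (huniv e f hef) ▸ Finset.mem_univ x
        rcases Finset.mem_union.1 this with h | h
        exacts [hx h, hy h]
      have hcardU : ((Finset.univ : Finset E).biUnion cpl).card = 2 * m := by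
        rw [Finset.card_biUnion (fun x _ y _ hxy => hdisj x y hxy)]
        rw [Finset.sum_congr rfl (fun x _ => hcc x), Finset.sum_const, Finset.card_univ,
          ← hmdef, smul_eq_mul]
        ring
      have hm3 : m ≤ 3 := by
        have hle : ((Finset.univ : Finset E).biUnion cpl).card ≤ Fintype.card V :=
          Finset.card_le_univ _
        rw [hcardU, hn6] at hle
        omega
      have hm23 : m = 2 ∨ m = 3 := by omega
      rcases hm23 with h2m | h3m
      · exact master g0 (Or.inr h2m)
      · have hbu : ((Finset.univ : Finset E).biUnion cpl) = Finset.univ := by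
          apply Finset.eq_univ_of_card
          rw [hcardU, h3m, hn6]
        have htriple : ∀ x : V, ¬ (∀ e : E, x ∈ F e) := by
          intro x hx
          have : x ∈ (Finset.univ : Finset E).biUnion cpl := hbu ▸ Finset.mem_univ x
          obtain ⟨e, -, hxe⟩ := Finset.mem_biUnion.1 this
          rw [hcdef] at hxe
          simp only [Finset.mem_sdiff, Finset.mem_univ, true_and] at hxe
          exact hxe (hx e)
        subst h3m
        have hall : ∀ x : V, x ∈ F (g0 ⟨0, by omega⟩) → x ∈ F (g0 ⟨1, by omega⟩) →
            x ∈ F (g0 ⟨2, by omega⟩) → False := by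
          intro x h0 h1 h2
          apply htriple x
          intro e
          rw [← g0.apply_symm_apply e]
          have hcases : ∀ j : Fin 3, j = 0 ∨ j = 1 ∨ j = 2 := by decide
          rcases hcases (g0.symm e) with h | h | h <;> rw [h] <;> assumption
        have hSne : ∀ i : ℕ, (F (g0 ⟨i % 3, Nat.mod_lt _ (by omega)⟩) ∩
            F (g0 ⟨(i+1) % 3, Nat.mod_lt _ (by omega)⟩)).Nonempty := by
          intro i
          rw [← Finset.card_pos]
          have := h2card (g0 ⟨i % 3, Nat.mod_lt _ (by omega)⟩)
            (g0 ⟨(i+1) % 3, Nat.mod_lt _ (by omega)⟩)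
          omega
        set w : ℕ → V := fun i => (hSne i).choose with hwdef
        have hw : ∀ i : ℕ, w i ∈ F (g0 ⟨i % 3, Nat.mod_lt _ (by omega)⟩) ∩
            F (g0 ⟨(i+1) % 3, Nat.mod_lt _ (by omega)⟩) := fun i => (hSne i).choose_spec
        apply euler_buildTour F 3 (by omega) g0 w ?_ ?_
        · intro i hi
          have hwi := hw i
          have e1 : (⟨i % 3, Nat.mod_lt _ (by omega)⟩ : Fin 3) = ⟨i, hi⟩ :=
            Fin.ext (Nat.mod_eq_of_lt hi)
          rwa [e1] at hwi
        · intro i hi hEq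
          interval_cases i
          · have h0 := hw 0
            have h1 := hw 1
            rw [Finset.mem_inter] at h0 h1
            norm_num at h0 h1 hEq
            exact hall (w 0) h0.1 (hEq ▸ h1.1) (hEq ▸ h1.2)
          · have h1 := hw 1
            have h2 := hw 2
            rw [Finset.mem_inter] at h1 h2
            norm_num at h1 h2 hEq
            exact hall (w 1) (hEq ▸ h2.2) h1.1 h1.2
          · have h0 := hw 0
            have h2 := hw 2
            rw [Finset.mem_inter] at h0 h2
            norm_num at h0 h2 hEq
            exact hall (w 2) h2.2 (hEq ▸ h0.2) h2.1
end

section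
/- Let ℓ and k be integers with 3 ≤ ℓ < k, let H = (V, E) be an ℓ-covering k-hypergraph, and let v ∈ V. Suppose for each edge e ∈ E a vertex u(e) ∈ e is chosen such that u(e) = v whenever v ∈ e. Then the hypergraph H* with vertex set V ∖ {v} and edge multiset { e ∖ {u(e)} : e ∈ E } is an (ℓ−1)-covering (k−1)-hypergraph. -/
/-- For `3 ≤ ℓ < k`, if `H` is an ℓ-covering k-hypergraph,
`v` a vertex, and for each edge `e` a vertex `u e ∈ e` is chosen with
`u e = v` whenever `v ∈ e`, then the hypergraph on `V ∖ {v}` with edges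
`e ∖ {u e}` is an (ℓ−1)-covering (k−1)-hypergraph. -/
theorem contraction_covering {V E : Type*} [Fintype V] [Nonempty V] [Fintype E]
    [DecidableEq V]
    (ℓ k : ℕ) (hℓ : 3 ≤ ℓ) (hℓk : ℓ < k)
    (F : E → Finset V)
    (hcov : IsCoveringHypergraph V E F ℓ k)
    (v : V) (u : E → V)
    (hu : ∀ e : E, u e ∈ F e)
    (huv : ∀ e : E, v ∈ F e → u e = v) :
    (∀ e : E, ((F e).erase (u e)).card = k - 1) ∧
    (∀ S : Finset V, v ∉ S → S.card = ℓ - 1 → ∃ e : E, S ⊆ (F e).erase (u e)) := by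
  obtain ⟨hunif, hc⟩ := hcov
  constructor
  · intro e
    rw [Finset.card_erase_of_mem (hu e), hunif e]
  · intro S hvS hScard
    obtain ⟨e, he⟩ := hc (insert v S) (by
      rw [Finset.card_insert_of_notMem hvS, hScard]
      omega)
    have hv : v ∈ F e := he (Finset.mem_insert_self v S)
    refine ⟨e, fun x hx => Finset.mem_erase.2 ⟨?_, he (Finset.mem_insert_of_mem hx)⟩⟩
    rw [huv e hv]
    rintro rfl; exact hvS hx
end
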